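/- arXiv:2011.13502 — 2 statements merged into one kernel-verified Lean document; each statement's English description precedes it below -/
import Mathlib

section
/- (Preconditioning across surfaces.) Let V_h and V̂_h be finite-dimensional spaces, Π_h : V̂_h → V_h a linear bijection, A_h : V_h → V_h' symmetric positive semi-definite whose kernel consists exactly of the constant function(s) (when c = 0), and Â_h : V̂_h → V̂_h' symmetric positive definite. Assume the norm-equivalence bounds L₀⁻¹‖v‖₀ ≤ ‖Π_h v‖₀ ≤ L₀‖v‖₀ and L₁⁻¹|v|₁ ≤ |Π_h v|₁ ≤ L₁|v|₁, where |·|₁ denotes the energy seminorm and ‖·‖₀ the L²-type norm on the respective surfaces, together with a Poincaré inequality ‖v − v̄‖₀ ≤ c_P|v|₁ on the reference side. Then for any SPD B̂_h : V̂_h' → V̂_h, the operator B_h := Π_h B̂_h Π_h' satisfies κ(B_h A_h) ≤ C κ(B̂_h Â_h) with C depending only on L₀, L₁, c_P. -/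
open scoped RealInnerProductSpace

universe u v

/-- Rayleigh-quotient spectral bounds for `B ∘ A` relative to the `A`-(semi-)inner product on
the quotient modulo `ker A` (dual spaces identified with the space via Riesz). -/
def SpecBounds {V : Type*} [NormedAddCommGroup V] [InnerProductSpace ℝ V]
    (A B : V →ₗ[ℝ] V) (m M : ℝ) : Prop :=
  ∀ w : V, m * ⟪A w, w⟫ ≤ ⟪A (B (A w)), w⟫ ∧ ⟪A (B (A w)), w⟫ ≤ M * ⟪A w, w⟫


private lemma cs_psd {V : Type*} [NormedAddCommGroup V] [InnerProductSpace ℝ V]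
    (T : V →ₗ[ℝ] V) (hs : ∀ x y : V, ⟪T x, y⟫ = ⟪T y, x⟫) (hp : ∀ x : V, 0 ≤ ⟪T x, x⟫)
    (u v : V) : ⟪T u, v⟫ ^ 2 ≤ ⟪T u, u⟫ * ⟪T v, v⟫ := by
  have key : ∀ t : ℝ, 0 ≤ ⟪T v, v⟫ * (t * t) + (2 * ⟪T u, v⟫) * t + ⟪T u, u⟫ := by
    intro t
    have h := hp (u + t • v)
    have hexp : ⟪T (u + t • v), u + t • v⟫
        = ⟪T v, v⟫ * (t * t) + (2 * ⟪T u, v⟫) * t + ⟪T u, u⟫ := by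
      simp only [map_add, map_smul, inner_add_left, inner_add_right,
        real_inner_smul_left, real_inner_smul_right]
      rw [hs v u]; ring
    rw [hexp] at h; exact h
  have hd := discrim_le_zero key
  have hd' : (2 * ⟪T u, v⟫) ^ 2 - 4 * ⟪T v, v⟫ * ⟪T u, u⟫ ≤ 0 := hd
  nlinarith [hd']

private lemma sq_of_sqrt_le {a b L : ℝ} (ha : 0 ≤ a) (hb : 0 ≤ b)
    (h : Real.sqrt a ≤ L * Real.sqrt b) : a ≤ L ^ 2 * b := by
  have h1 := Real.sq_sqrt ha
  have h2 := Real.sq_sqrt hb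
  nlinarith [Real.sqrt_nonneg a, Real.sqrt_nonneg b,
    mul_self_le_mul_self (Real.sqrt_nonneg a) h]

set_option maxHeartbeats 2000000 in
/-- preconditioning across surfaces.  Let `Π_h : V̂_h ≃ V_h` be a linear
bijection, `A_h` symmetric positive semi-definite with kernel spanned by the constant function
`Π_h 1̂` (the case `c = 0`), `M_h` an SPD mass (L²) operator on `V_h`, and
`Â_h = Ĝ_h + M̂_h` SPD on the reference side (`Ĝ_h` the PSD energy part, `M̂_h` the SPD mass
part; `‖·‖₀² = ⟨M̂ ·,·⟩` and `|·|₁² = ⟨Ĝ ·,·⟩` resp. `⟨A_h ·,·⟩`).  Under the two-sided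
`L²`- and energy-norm equivalences with constants `L₀, L₁` and the reference Poincaré
inequality `‖w − w̄‖₀ ≤ c_P |w|₁` (the mean `w̄` being the `M̂`-orthogonal projection onto the
constants `ℝ·1̂`), there is `C > 0` depending only on `L₀, L₁, c_P` such that for every SPD
`B̂_h`, the operator `B_h = Π_h B̂_h Π_h'` satisfies `κ(B_h A_h) ≤ C κ(B̂_h Â_h)`. -/
theorem stmt9 (L₀ L₁ cP : ℝ) (hL₀ : 0 < L₀) (hL₁ : 0 < L₁) (hcP : 0 < cP) :
    ∃ C : ℝ, 0 < C ∧
      ∀ (Vh : Type u) (Vhat : Type v)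
        [NormedAddCommGroup Vh] [InnerProductSpace ℝ Vh] [FiniteDimensional ℝ Vh]
        [NormedAddCommGroup Vhat] [InnerProductSpace ℝ Vhat] [FiniteDimensional ℝ Vhat],
        ∀ (Ph : Vhat ≃ₗ[ℝ] Vh)
          (Ah Mh : Vh →ₗ[ℝ] Vh) (Ahat Ghat Mhat Bhat : Vhat →ₗ[ℝ] Vhat),
        (∀ v w : Vh, ⟪Ah v, w⟫ = ⟪Ah w, v⟫) → (∀ v : Vh, 0 ≤ ⟪Ah v, v⟫) →
        (∀ v w : Vh, ⟪Mh v, w⟫ = ⟪Mh w, v⟫) → (∀ v : Vh, 0 ≤ ⟪Mh v, v⟫) →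
        (∀ v : Vh, ⟪Mh v, v⟫ = 0 → v = 0) →
        (∀ v w : Vhat, ⟪Ghat v, w⟫ = ⟪Ghat w, v⟫) → (∀ v : Vhat, 0 ≤ ⟪Ghat v, v⟫) →
        (∀ v w : Vhat, ⟪Mhat v, w⟫ = ⟪Mhat w, v⟫) → (∀ v : Vhat, 0 ≤ ⟪Mhat v, v⟫) →
        (∀ v : Vhat, ⟪Mhat v, v⟫ = 0 → v = 0) →
        Ahat = Ghat + Mhat →
        (∀ v w : Vhat, ⟪Bhat v, w⟫ = ⟪Bhat w, v⟫) → (∀ v : Vhat, 0 ≤ ⟪Bhat v, v⟫) →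
        (∀ v : Vhat, ⟪Bhat v, v⟫ = 0 → v = 0) →
        ∀ onehat : Vhat, onehat ≠ 0 →
        LinearMap.ker Ah = Submodule.span ℝ {Ph onehat} →
        -- two-sided L²-norm equivalence for `Π_h` with constant `L₀`
        (∀ w : Vhat, L₀⁻¹ * Real.sqrt ⟪Mhat w, w⟫ ≤ Real.sqrt ⟪Mh (Ph w), Ph w⟫ ∧
            Real.sqrt ⟪Mh (Ph w), Ph w⟫ ≤ L₀ * Real.sqrt ⟪Mhat w, w⟫) →
        -- two-sided energy-seminorm equivalence for `Π_h` with constant `L₁`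
        (∀ w : Vhat, L₁⁻¹ * Real.sqrt ⟪Ghat w, w⟫ ≤ Real.sqrt ⟪Ah (Ph w), Ph w⟫ ∧
            Real.sqrt ⟪Ah (Ph w), Ph w⟫ ≤ L₁ * Real.sqrt ⟪Ghat w, w⟫) →
        -- Poincaré inequality on the reference surface
        (∀ w : Vhat,
            Real.sqrt ⟪Mhat (w - (⟪Mhat w, onehat⟫ / ⟪Mhat onehat, onehat⟫) • onehat),
                w - (⟪Mhat w, onehat⟫ / ⟪Mhat onehat, onehat⟫) • onehat⟫ ≤
              cP * Real.sqrt ⟪Ghat w, w⟫) →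
        ∀ mt Mt : ℝ, 0 < mt → SpecBounds Ahat Bhat mt Mt →
          ∃ m M : ℝ, 0 < m ∧
            SpecBounds Ah
              (Ph.toLinearMap ∘ₗ Bhat ∘ₗ LinearMap.adjoint Ph.toLinearMap) m M ∧
            M / m ≤ C * (Mt / mt) := by

  refine ⟨L₁ ^ 4 * (1 + cP ^ 2), by positivity, ?_⟩
  intro Vh Vhat _ _ _ _ _ _ Ph Ah Mh Ahat Ghat Mhat Bhat
    hAs hAp _hMs _hMp _hMd hGs hGp hMhs hMhp hMhd hAhat _hBs _hBp _hBd
    onehat h1 hker _hL2 hE hP mt Mt hmt hspec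
  -- Ahat is symmetric and positive definite
  have hAhs : ∀ x y : Vhat, ⟪Ahat x, y⟫ = ⟪Ahat y, x⟫ := by
    intro x y; simp only [hAhat, LinearMap.add_apply, inner_add_left]
    rw [hGs x y, hMhs x y]
  have hAhp : ∀ x : Vhat, 0 ≤ ⟪Ahat x, x⟫ := by
    intro x
    have hg := hGp x; have hm := hMhp x
    simp only [hAhat, LinearMap.add_apply, inner_add_left]; linarith
  have hAhinj : Function.Injective Ahat := by
    rw [← LinearMap.ker_eq_bot, Submodule.eq_bot_iff]
    intro x hx
    rw [LinearMap.mem_ker] at hx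
    have h0 : ⟪Ghat x, x⟫ + ⟪Mhat x, x⟫ = 0 := by
      have hz : ⟪Ahat x, x⟫ = (0:ℝ) := by rw [hx]; simp
      simpa [hAhat, LinearMap.add_apply, inner_add_left] using hz
    have := hGp x; have := hMhp x
    exact hMhd x (by linarith)
  have hAhsurj : Function.Surjective Ahat := LinearMap.surjective_of_injective hAhinj
  -- the kernel vector
  have hker1 : Ah (Ph onehat) = 0 := by
    have hm : Ph onehat ∈ LinearMap.ker Ah := by
      rw [hker]; exact Submodule.mem_span_singleton_self _
    exact hm
  have hG1 : ⟪Ghat onehat, onehat⟫ = 0 := by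
    have h := (hE onehat).1
    have h0 : Real.sqrt ⟪Ah (Ph onehat), Ph onehat⟫ = 0 := by
      rw [hker1]; simp
    rw [h0] at h
    have hnn := Real.sqrt_nonneg ⟪Ghat onehat, onehat⟫
    have hs0 : Real.sqrt ⟪Ghat onehat, onehat⟫ = 0 := by
      nlinarith [inv_pos.mpr hL₁]
    have hle := Real.sqrt_eq_zero'.mp hs0
    exact le_antisymm hle (hGp onehat)
  -- Mt is positive
  have hA1pos : 0 < ⟪Ahat onehat, onehat⟫ := by
    have hm : 0 ≤ ⟪Mhat onehat, onehat⟫ := hMhp onehat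
    have hne : ⟪Mhat onehat, onehat⟫ ≠ 0 := fun hc => h1 (hMhd onehat hc)
    simp only [hAhat, LinearMap.add_apply, inner_add_left, hG1]
    have := lt_of_le_of_ne hm (Ne.symm hne)
    linarith
  have hMtpos : 0 < Mt := by
    have hlo := (hspec onehat).1
    have hhi := (hspec onehat).2
    nlinarith
  -- energy equivalences squared
  have hGA : ∀ x : Vhat, ⟪Ghat x, x⟫ ≤ L₁ ^ 2 * ⟪Ah (Ph x), Ph x⟫ := by
    intro x
    have h := (hE x).1
    have h' : Real.sqrt ⟪Ghat x, x⟫ ≤ L₁ * Real.sqrt ⟪Ah (Ph x), Ph x⟫ := by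
      have h2 := mul_le_mul_of_nonneg_left h (le_of_lt hL₁)
      rwa [← mul_assoc, mul_inv_cancel₀ (ne_of_gt hL₁), one_mul] at h2
    exact sq_of_sqrt_le (hGp x) (hAp (Ph x)) h'
  have hAG : ∀ x : Vhat, ⟪Ah (Ph x), Ph x⟫ ≤ L₁ ^ 2 * ⟪Ghat x, x⟫ :=
    fun x => sq_of_sqrt_le (hAp (Ph x)) (hGp x) (hE x).2
  set c₂ : ℝ := (1 + cP ^ 2) * L₁ ^ 2 with hc₂
  have hc₂pos : 0 < c₂ := by positivity
  refine ⟨mt / c₂, Mt * L₁ ^ 2, by positivity, ?_, ?_⟩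
  · -- SpecBounds
    intro w
    set f : Vhat := LinearMap.adjoint Ph.toLinearMap (Ah w) with hf
    obtain ⟨g, hg⟩ := hAhsurj f
    set q : ℝ := ⟪Ahat g, g⟫ with hq
    have hqnn : 0 ≤ q := hAhp g
    have hmain : ⟪Ah ((Ph.toLinearMap ∘ₗ Bhat ∘ₗ LinearMap.adjoint Ph.toLinearMap) (Ah w)), w⟫
        = ⟪Bhat f, f⟫ := by
      simp only [LinearMap.comp_apply, ← hf]
      rw [hAs, ← LinearMap.adjoint_inner_left Ph.toLinearMap (Bhat f) (Ah w), ← hf,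
        real_inner_comm]
    have hBAh : ⟪Ahat (Bhat (Ahat g)), g⟫ = ⟪Bhat f, f⟫ := by
      rw [hg, hAhs, real_inner_comm, hg]
    have hlow : mt * q ≤ ⟪Bhat f, f⟫ := by
      have h := (hspec g).1; rw [hBAh] at h; exact h
    have hhigh : ⟪Bhat f, f⟫ ≤ Mt * q := by
      have h := (hspec g).2; rw [hBAh] at h; exact h
    -- Step C : q ≤ L₁² ⟪Ah w, w⟫
    have hqfg : q = ⟪Ah w, Ph g⟫ := by
      rw [hq, hg, hf, LinearMap.adjoint_inner_left]
      rfl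
    have hCS : ⟪Ah w, Ph g⟫ ^ 2 ≤ ⟪Ah w, w⟫ * ⟪Ah (Ph g), Ph g⟫ := cs_psd Ah hAs hAp w (Ph g)
    have hGleA : ⟪Ghat g, g⟫ ≤ q := by
      have := hMhp g
      rw [hq]
      simp only [hAhat, LinearMap.add_apply, inner_add_left]; linarith
    have hqup : q ≤ L₁ ^ 2 * ⟪Ah w, w⟫ := by
      rcases eq_or_lt_of_le hqnn with h | h
      · rw [← h]; exact mul_nonneg (sq_nonneg L₁) (hAp w)
      · have hstep : q ^ 2 ≤ (L₁ ^ 2 * ⟪Ah w, w⟫) * q := by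
          calc q ^ 2 = ⟪Ah w, Ph g⟫ ^ 2 := by rw [hqfg]
            _ ≤ ⟪Ah w, w⟫ * ⟪Ah (Ph g), Ph g⟫ := hCS
            _ ≤ ⟪Ah w, w⟫ * (L₁ ^ 2 * ⟪Ghat g, g⟫) :=
              mul_le_mul_of_nonneg_left (hAG g) (hAp w)
            _ ≤ ⟪Ah w, w⟫ * (L₁ ^ 2 * q) :=
              mul_le_mul_of_nonneg_left
                (mul_le_mul_of_nonneg_left hGleA (sq_nonneg L₁)) (hAp w)
            _ = (L₁ ^ 2 * ⟪Ah w, w⟫) * q := by ring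
        nlinarith [hstep, h]
    -- Step D : ⟪Ah w, w⟫ ≤ c₂ q
    set u : Vhat := Ph.symm w with hu
    set α : ℝ := ⟪Mhat u, onehat⟫ / ⟪Mhat onehat, onehat⟫ with hα
    set vv : Vhat := u - α • onehat with hvv
    have hPhu : Ph u = w := Ph.apply_symm_apply w
    have hAw1 : ⟪Ah w, Ph onehat⟫ = 0 := by rw [hAs, hker1]; simp
    have hfv : ⟪f, vv⟫ = ⟪Ah w, w⟫ := by
      rw [hf, LinearMap.adjoint_inner_left]
      have hexp : (Ph.toLinearMap : Vhat →ₗ[ℝ] Vh) vv = w - α • Ph onehat := by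
        simp only [hvv, LinearEquiv.coe_coe, map_sub, map_smul, hPhu]
      rw [hexp, inner_sub_right, real_inner_smul_right, hAw1]
      ring
    have hG1u : ⟪Ghat onehat, u⟫ = 0 := by
      have hcs := cs_psd Ghat hGs hGp onehat u
      rw [hG1] at hcs
      have h0 : ⟪Ghat onehat, u⟫ ^ 2 ≤ 0 := by linarith
      have hsq : ⟪Ghat onehat, u⟫ ^ 2 = 0 := le_antisymm h0 (sq_nonneg _)
      exact pow_eq_zero_iff (by norm_num : (2:ℕ) ≠ 0) |>.mp hsq
    have hGvv : ⟪Ghat vv, vv⟫ = ⟪Ghat u, u⟫ := by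
      simp only [hvv, map_sub, map_smul, inner_sub_left, inner_sub_right,
        real_inner_smul_left, real_inner_smul_right]
      rw [hGs u onehat, hG1u, hG1]
      ring
    have hMvv : ⟪Mhat vv, vv⟫ ≤ cP ^ 2 * ⟪Ghat u, u⟫ := by
      have := sq_of_sqrt_le (hMhp vv) (hGp u) (hP u)
      exact this
    have hAvv : ⟪Ahat vv, vv⟫ ≤ c₂ * ⟪Ah w, w⟫ := by
      have h1' : ⟪Ahat vv, vv⟫ = ⟪Ghat vv, vv⟫ + ⟪Mhat vv, vv⟫ := by
        simp only [hAhat, LinearMap.add_apply, inner_add_left]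
      have h2' : ⟪Ghat u, u⟫ ≤ L₁ ^ 2 * ⟪Ah w, w⟫ := by
        have := hGA u; rwa [hPhu] at this
      rw [h1', hGvv, hc₂]
      nlinarith [hGp u, hMvv, h2', mul_le_mul_of_nonneg_left h2' (sq_nonneg cP)]
    have hCSv : ⟪f, vv⟫ ^ 2 ≤ q * ⟪Ahat vv, vv⟫ := by
      have h := cs_psd Ahat hAhs hAhp g vv
      rw [← hq, hg] at h
      exact h
    have hAwlow : ⟪Ah w, w⟫ ≤ c₂ * q := by
      rcases eq_or_lt_of_le (hAp w) with h | h
      · rw [← h]; exact mul_nonneg hc₂pos.le hqnn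
      · have hstep : ⟪Ah w, w⟫ ^ 2 ≤ (c₂ * q) * ⟪Ah w, w⟫ := by
          calc ⟪Ah w, w⟫ ^ 2 = ⟪f, vv⟫ ^ 2 := by rw [hfv]
            _ ≤ q * ⟪Ahat vv, vv⟫ := hCSv
            _ ≤ q * (c₂ * ⟪Ah w, w⟫) := mul_le_mul_of_nonneg_left hAvv hqnn
            _ = (c₂ * q) * ⟪Ah w, w⟫ := by ring
        nlinarith [hstep, h]
    constructor
    · rw [hmain, div_mul_eq_mul_div, div_le_iff₀ hc₂pos]
      nlinarith [mul_le_mul_of_nonneg_left hAwlow hmt.le,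
        mul_le_mul_of_nonneg_left hlow hc₂pos.le]
    · rw [hmain]
      nlinarith [hhigh, mul_le_mul_of_nonneg_left hqup hMtpos.le]
  · -- condition number bound
    have heq : Mt * L₁ ^ 2 / (mt / c₂) = L₁ ^ 4 * (1 + cP ^ 2) * (Mt / mt) := by
      rw [hc₂]; field_simp
    rw [heq]
end

section
/- (Two-level preconditioner for a semi-definite operator via its definite shift.) Let 𝒱 be a finite-dimensional space with L²-type norm ‖·‖ and energy seminorm |·|₁, and let 𝒜⁰, 𝒜¹ : 𝒱 → 𝒱' be defined by ⟨𝒜⁰v,w⟩ = a(v,w) and ⟨𝒜¹v,w⟩ = a(v,w) + (v,w), where a is a symmetric positive semi-definite bilinear form with |v|₁² = a(v,v), and the kernel of 𝒜⁰ consists of constants. Assume the Poincaré inequality ‖v − v̄‖ ≤ c_P |v|₁ for all v ∈ 𝒱. Then for any symmetric positive definite B : 𝒱' → 𝒱, κ(B𝒜⁰) ≤ C κ(B𝒜¹), where κ(B𝒜⁰) is the condition number on the quotient 𝒱/N(𝒜⁰) and C depends only on c_P and |M| (the measure used in defining means). -/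
open scoped RealInnerProductSpace

/-- Cauchy–Schwarz for a symmetric positive semidefinite operator form. -/
lemma cs_psd_s13 {V : Type*} [NormedAddCommGroup V] [InnerProductSpace ℝ V]
    (A : V →ₗ[ℝ] V) (hsym : ∀ v w : V, ⟪A v, w⟫ = ⟪A w, v⟫)
    (hpos : ∀ v : V, 0 ≤ ⟪A v, v⟫) (v w : V) :
    ⟪A v, w⟫ ^ 2 ≤ ⟪A v, v⟫ * ⟪A w, w⟫ := by
  have h : ∀ t : ℝ, 0 ≤ ⟪A v, v⟫ * (t * t) + (2 * ⟪A v, w⟫) * t + ⟪A w, w⟫ := by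
    intro t
    have e : ⟪A (w + t • v), w + t • v⟫ =
        ⟪A v, v⟫ * (t * t) + (2 * ⟪A v, w⟫) * t + ⟪A w, w⟫ := by
      rw [map_add, map_smul, inner_add_left, inner_add_right, inner_add_right,
        real_inner_smul_left, real_inner_smul_right, real_inner_smul_left,
        real_inner_smul_right, hsym w v]
      ring
    have := hpos (w + t • v)
    linarith [e ▸ this]
  have hd := discrim_le_zero h
  rw [discrim] at hd
  nlinarith [hd]

/-- two-level preconditioning of a semi-definite operator via its definite
shift.  Let `𝒜⁰` be a symmetric positive semi-definite operator (the energy form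
`a(v,w) = ⟨𝒜⁰v,w⟩`, `|v|₁² = ⟨𝒜⁰v,v⟩`), `Mo` an SPD mass operator realizing the L²-inner
product, and `𝒜¹ = 𝒜⁰ + Mo`.  Assume the kernel of `𝒜⁰` is spanned by the constant `onev ≠ 0`
and the Poincaré inequality `‖v − v̄‖ ≤ c_P |v|₁` holds, the mean `v̄` being the
`Mo`-orthogonal projection on the constants.  Then there is `C > 0` depending only on `c_P`
such that for every SPD `B`, `κ(B𝒜⁰) ≤ C κ(B𝒜¹)` (condition numbers on the quotient
`𝒱 / ker 𝒜⁰`). -/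
theorem stmt13 (cP : ℝ) (hcP : 0 < cP) :
    ∃ C : ℝ, 0 < C ∧
      ∀ (𝒱 : Type) [NormedAddCommGroup 𝒱] [InnerProductSpace ℝ 𝒱] [FiniteDimensional ℝ 𝒱],
      ∀ (A0 Mo B : 𝒱 →ₗ[ℝ] 𝒱),
        (∀ v w : 𝒱, ⟪A0 v, w⟫ = ⟪A0 w, v⟫) → (∀ v : 𝒱, 0 ≤ ⟪A0 v, v⟫) →
        (∀ v w : 𝒱, ⟪Mo v, w⟫ = ⟪Mo w, v⟫) → (∀ v : 𝒱, 0 ≤ ⟪Mo v, v⟫) →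
        (∀ v : 𝒱, ⟪Mo v, v⟫ = 0 → v = 0) →
        (∀ v w : 𝒱, ⟪B v, w⟫ = ⟪B w, v⟫) → (∀ v : 𝒱, 0 ≤ ⟪B v, v⟫) →
        (∀ v : 𝒱, ⟪B v, v⟫ = 0 → v = 0) →
        ∀ onev : 𝒱, onev ≠ 0 →
        LinearMap.ker A0 = Submodule.span ℝ {onev} →
        -- Poincaré inequality with the `Mo`-orthogonal projection onto constants as the mean
        (∀ v : 𝒱,
            Real.sqrt ⟪Mo (v - (⟪Mo v, onev⟫ / ⟪Mo onev, onev⟫) • onev),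
                v - (⟪Mo v, onev⟫ / ⟪Mo onev, onev⟫) • onev⟫ ≤
              cP * Real.sqrt ⟪A0 v, v⟫) →
        ∀ m M : ℝ, 0 < m → SpecBounds (A0 + Mo) B m M →
          ∃ m' M' : ℝ, 0 < m' ∧ SpecBounds A0 B m' M' ∧ M' / m' ≤ C * (M / m) := by
  refine ⟨1 + cP ^ 2, by positivity, ?_⟩
  intro 𝒱 _ _ _ A0 Mo B hA0sym hA0pos hMosym hMopos hModef hBsym hBpos hBdef
    onev honev hker hPoin m M hm hspec
  have hA1app : ∀ v : 𝒱, (A0 + Mo) v = A0 v + Mo v := fun v => rfl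
  have hA1sym : ∀ v w : 𝒱, ⟪(A0 + Mo) v, w⟫ = ⟪(A0 + Mo) w, v⟫ := by
    intro v w; simp only [hA1app, inner_add_left]; rw [hA0sym v w, hMosym v w]
  have hA1pos : ∀ v : 𝒱, 0 ≤ ⟪(A0 + Mo) v, v⟫ := by
    intro v; simp only [hA1app, inner_add_left]
    exact add_nonneg (hA0pos v) (hMopos v)
  have hinj : Function.Injective (A0 + Mo) := by
    rw [← LinearMap.ker_eq_bot, LinearMap.ker_eq_bot']
    intro v hv
    apply hModef
    have h0 : ⟪(A0 + Mo) v, v⟫ = 0 := by rw [hv]; simp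
    simp only [hA1app, inner_add_left] at h0
    linarith [hA0pos v, hMopos v]
  have hsurj : Function.Surjective (A0 + Mo) := (LinearMap.injective_iff_surjective).mp hinj
  have hA0one : A0 onev = 0 := by
    have : onev ∈ LinearMap.ker A0 := by
      rw [hker]; exact Submodule.mem_span_singleton_self onev
    exact this
  refine ⟨m / (1 + cP ^ 2), M, by positivity, ?_, ?_⟩
  · intro w
    obtain ⟨z, hz⟩ := hsurj (A0 w)
    obtain ⟨h1, h2⟩ := hspec z
    rw [hz] at h1 h2
    have key : ⟪(A0 + Mo) (B (A0 w)), z⟫ = ⟪B (A0 w), A0 w⟫ := by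
      rw [hA1sym, hz, real_inner_comm]
    rw [key] at h1 h2
    have hz2 : ⟪(A0 + Mo) z, z⟫ = ⟪A0 w, z⟫ := by rw [hz]
    -- step 1: ⟪A0 w, z⟫ ≤ ⟪A0 w, w⟫
    have hCS1 : ⟪A0 w, z⟫ ^ 2 ≤ ⟪A0 w, w⟫ * ⟪A0 z, z⟫ := cs_psd_s13 A0 hA0sym hA0pos w z
    have hA0leA1 : ⟪A0 z, z⟫ ≤ ⟪A0 w, z⟫ := by
      have := hz2 ▸ hA1pos z
      simp only [hA1app, inner_add_left] at hz2
      linarith [hMopos z]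
    have hznn : 0 ≤ ⟪A0 w, z⟫ := hz2 ▸ hA1pos z
    have hub : ⟪A0 w, z⟫ ≤ ⟪A0 w, w⟫ := by
      nlinarith [hA0pos z, hA0pos w]
    -- step 2: ⟪A0 w, w⟫ ≤ (1 + cP^2) * ⟪A0 w, z⟫  (stable lifting)
    set c : ℝ := ⟪Mo w, onev⟫ / ⟪Mo onev, onev⟫ with hc
    set wt : 𝒱 := w - c • onev with hwt
    have hA0wt : A0 wt = A0 w := by
      simp [hwt, map_sub, map_smul, hA0one]
    have hA0wbar : ⟪A0 w, c • onev⟫ = 0 := by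
      rw [hA0sym, map_smul, inner_smul_left]
      simp [hA0one]
    have hEwt : ⟪A0 wt, wt⟫ = ⟪A0 w, w⟫ := by
      rw [hA0wt, hwt, inner_sub_right, hA0wbar, sub_zero]
    have hMowt : ⟪Mo wt, wt⟫ ≤ cP ^ 2 * ⟪A0 w, w⟫ := by
      have h1' : Real.sqrt ⟪Mo wt, wt⟫ ≤ cP * Real.sqrt ⟪A0 w, w⟫ := hPoin w
      have h2' : (Real.sqrt ⟪Mo wt, wt⟫) ^ 2 ≤ (cP * Real.sqrt ⟪A0 w, w⟫) ^ 2 := by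
        apply sq_le_sq' _ h1'
        nlinarith [Real.sqrt_nonneg ⟪Mo wt, wt⟫, Real.sqrt_nonneg ⟪A0 w, w⟫, hcP.le]
      rw [Real.sq_sqrt (hMopos wt), mul_pow, Real.sq_sqrt (hA0pos w)] at h2'
      exact h2'
    have hA1wt : ⟪(A0 + Mo) wt, wt⟫ ≤ (1 + cP ^ 2) * ⟪A0 w, w⟫ := by
      simp only [hA1app, inner_add_left]
      rw [hEwt]; linarith
    have heq : ⟪(A0 + Mo) z, wt⟫ = ⟪A0 w, w⟫ := by
      rw [hz, hwt, inner_sub_right, hA0wbar, sub_zero]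
    have hCS2 : ⟪(A0 + Mo) z, wt⟫ ^ 2 ≤ ⟪(A0 + Mo) z, z⟫ * ⟪(A0 + Mo) wt, wt⟫ :=
      cs_psd_s13 (A0 + Mo) hA1sym hA1pos z wt
    rw [heq, hz2] at hCS2
    have hlb : ⟪A0 w, w⟫ ≤ (1 + cP ^ 2) * ⟪A0 w, z⟫ := by
      rcases le_or_gt ⟪A0 w, w⟫ 0 with h | h
      · have h4 : 0 ≤ (1 + cP ^ 2) * ⟪A0 w, z⟫ := by positivity
        linarith
      · have h5 : ⟪A0 w, w⟫ ^ 2 ≤ ⟪A0 w, z⟫ * ((1 + cP ^ 2) * ⟪A0 w, w⟫) :=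
          hCS2.trans (mul_le_mul_of_nonneg_left hA1wt hznn)
        nlinarith [h5, h]
    have keyA0 : ⟪A0 (B (A0 w)), w⟫ = ⟪B (A0 w), A0 w⟫ := by
      rw [hA0sym, real_inner_comm]
    rw [keyA0]
    constructor
    · have hstep : m / (1 + cP ^ 2) * ⟪A0 w, w⟫ ≤ m * ⟪A0 w, z⟫ := by
        have h6 : m / (1 + cP ^ 2) * ⟪A0 w, w⟫ ≤
            m / (1 + cP ^ 2) * ((1 + cP ^ 2) * ⟪A0 w, z⟫) :=
          mul_le_mul_of_nonneg_left hlb (by positivity)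
        have h7 : m / (1 + cP ^ 2) * ((1 + cP ^ 2) * ⟪A0 w, z⟫) = m * ⟪A0 w, z⟫ := by
          field_simp
        linarith
      linarith
    · rcases le_or_gt 0 M with hM | hM
      · exact h2.trans (mul_le_mul_of_nonneg_left hub hM)
      · -- M < 0 : then everything is zero
        have hB0 : 0 ≤ ⟪B (A0 w), A0 w⟫ := hBpos (A0 w)
        have hMZle : M * ⟪A0 w, z⟫ ≤ 0 := mul_nonpos_of_nonpos_of_nonneg hM.le hznn
        have hMZ0 : M * ⟪A0 w, z⟫ = 0 := le_antisymm hMZle (hB0.trans h2)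
        have hz0 : ⟪A0 w, z⟫ = 0 := by
          rcases mul_eq_zero.mp hMZ0 with h | h
          · exact absurd h hM.ne
          · exact h
        have hA0w0 : A0 w = 0 := by
          have h0 : ⟪(A0 + Mo) z, z⟫ = 0 := by rw [hz2, hz0]
          simp only [hA1app, inner_add_left] at h0
          have hMz : ⟪Mo z, z⟫ = 0 := by linarith [hA0pos z, hMopos z]
          have hz' : z = 0 := hModef z hMz
          rw [← hz, hz']; simp
        rw [hA0w0]
        simp
  · apply le_of_eq
    field_simp
end
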